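/- Let N and t be positive integers and let X be a subset of {1, …, N} × {1, …, N} with |X| > 4Nt. Then there exists (a, b) ∈ X such that X contains at least t points of the form (a′, b) with a′ < a, at least t points of the form (a′, b) with a′ > a, at least t points of the form (a, b′) with b′ < b, and at least t points of the form (a, b′) with b′ > b. -/

import Mathlib

private lemma rank_bound (R : Finset (ℕ × ℕ)) (v : ℕ × ℕ → ℕ) (hv : Set.InjOn v R) (t : ℕ)
    (lt' : ℕ → ℕ → Prop) [DecidableRel lt'] (htrans : Transitive lt')
    (hirr : ∀ a, ¬ lt' a a) (hconn : ∀ a b : ℕ, a ≠ b → lt' a b ∨ lt' b a) :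
    (R.filter (fun p => (R.filter (fun q => lt' (v q) (v p))).card < t)).card ≤ t := by
  classical
  have h := Finset.card_le_card_of_injOn
    (f := fun p => (R.filter (fun q => lt' (v q) (v p))).card)
    (s := R.filter (fun p => (R.filter (fun q => lt' (v q) (v p))).card < t))
    (t := Finset.range t)
    (by
      intro p hp
      simp only [Finset.mem_coe, Finset.mem_filter] at hp
      simpa using hp.2)
    (by
      intro p hp p' hp' heq
      simp only [Finset.coe_filter, Set.mem_setOf_eq] at hp hp'
      by_contra hne
      have hvne : v p ≠ v p' := fun h => hne (hv hp.1 hp'.1 h)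
      have key : ∀ x y : ℕ × ℕ, x ∈ R → y ∈ R → lt' (v x) (v y) →
          (R.filter (fun q => lt' (v q) (v x))).card < (R.filter (fun q => lt' (v q) (v y))).card := by
        intro x y hx hy hxy
        apply Finset.card_lt_card
        constructor
        · intro q hq
          simp only [Finset.mem_filter] at hq ⊢
          exact ⟨hq.1, htrans hq.2 hxy⟩
        · intro hsub
          have : x ∈ R.filter (fun q => lt' (v q) (v y)) := by
            simp only [Finset.mem_filter]; exact ⟨hx, hxy⟩
          have := hsub this
          simp only [Finset.mem_filter] at this
          exact hirr _ this.2
      rcases hconn _ _ hvne with h1 | h1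
      · exact absurd heq (Nat.ne_of_lt (key _ _ hp.1 hp'.1 h1))
      · exact absurd heq.symm (Nat.ne_of_lt (key _ _ hp'.1 hp.1 h1)))
  simpa using h

private lemma bad_bound (X : Finset (ℕ × ℕ)) (N t : ℕ) (k v : ℕ × ℕ → ℕ)
    (hkv : ∀ p q : ℕ × ℕ, k p = k q → v p = v q → p = q)
    (hk : ∀ p ∈ X, k p ∈ Finset.Icc 1 N)
    (lt' : ℕ → ℕ → Prop) [DecidableRel lt'] (htrans : Transitive lt')
    (hirr : ∀ a, ¬ lt' a a) (hconn : ∀ a b : ℕ, a ≠ b → lt' a b ∨ lt' b a) :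
    (X.filter (fun p => (X.filter (fun q => k q = k p ∧ lt' (v q) (v p))).card < t)).card
      ≤ N * t := by
  classical
  have hsub : X.filter (fun p => (X.filter (fun q => k q = k p ∧ lt' (v q) (v p))).card < t)
      ⊆ (Finset.Icc 1 N).biUnion (fun b =>
        (X.filter (fun p => k p = b)).filter
          (fun p => ((X.filter (fun p => k p = b)).filter (fun q => lt' (v q) (v p))).card < t)) := by
    intro p hp
    simp only [Finset.mem_filter] at hp
    rw [Finset.mem_biUnion]
    refine ⟨k p, hk p hp.1, ?_⟩
    rw [Finset.mem_filter, Finset.filter_filter, Finset.mem_filter]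
    exact ⟨⟨hp.1, rfl⟩, hp.2⟩
  calc (X.filter (fun p => (X.filter (fun q => k q = k p ∧ lt' (v q) (v p))).card < t)).card
      ≤ _ := Finset.card_le_card hsub
    _ ≤ ∑ b ∈ Finset.Icc 1 N, ((X.filter (fun p => k p = b)).filter
          (fun p => ((X.filter (fun p => k p = b)).filter (fun q => lt' (v q) (v p))).card < t)).card :=
        Finset.card_biUnion_le
    _ ≤ ∑ b ∈ Finset.Icc 1 N, t := by
        apply Finset.sum_le_sum
        intro b _
        apply rank_bound _ v _ t lt' htrans hirr hconn
        intro p hp q hq hvpq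
        simp only [Finset.coe_filter, Set.mem_setOf_eq] at hp hq
        exact hkv p q (hp.2.trans hq.2.symm) hvpq
    _ = N * t := by simp [Nat.card_Icc]

/-- If `N, t ≥ 1` and `X ⊆ {1,…,N} × {1,…,N}` has `|X| > 4Nt`, then some
point `(a, b) ∈ X` has at least `t` points of `X` strictly to its left in the same row, at
least `t` strictly to its right in the same row, at least `t` strictly below it in the same
column, and at least `t` strictly above it in the same column. -/
theorem stmt15 (N t : ℕ) (hN : 0 < N) (ht : 0 < t) (X : Finset (ℕ × ℕ))
    (hX : ∀ p ∈ X, p.1 ∈ Finset.Icc 1 N ∧ p.2 ∈ Finset.Icc 1 N)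
    (hcard : 4 * N * t < X.card) :
    ∃ p ∈ X,
      t ≤ (X.filter (fun q => q.2 = p.2 ∧ q.1 < p.1)).card ∧
      t ≤ (X.filter (fun q => q.2 = p.2 ∧ p.1 < q.1)).card ∧
      t ≤ (X.filter (fun q => q.1 = p.1 ∧ q.2 < p.2)).card ∧
      t ≤ (X.filter (fun q => q.1 = p.1 ∧ p.2 < q.2)).card := by
  classical
  by_contra hcon
  push_neg at hcon
  -- the four bad sets
  set B1 := X.filter (fun p => (X.filter (fun q => q.2 = p.2 ∧ q.1 < p.1)).card < t) with hB1def
  set B2 := X.filter (fun p => (X.filter (fun q => q.2 = p.2 ∧ p.1 < q.1)).card < t) with hB2def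
  set B3 := X.filter (fun p => (X.filter (fun q => q.1 = p.1 ∧ q.2 < p.2)).card < t) with hB3def
  set B4 := X.filter (fun p => (X.filter (fun q => q.1 = p.1 ∧ p.2 < q.2)).card < t) with hB4def
  have hXsub : X ⊆ B1 ∪ B2 ∪ B3 ∪ B4 := by
    intro p hp
    simp only [hB1def, hB2def, hB3def, hB4def, Finset.mem_union, Finset.mem_filter]
    rcases Nat.lt_or_ge (X.filter (fun q => q.2 = p.2 ∧ q.1 < p.1)).card t with h1 | h1
    · exact Or.inl (Or.inl (Or.inl ⟨hp, h1⟩))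
    rcases Nat.lt_or_ge (X.filter (fun q => q.2 = p.2 ∧ p.1 < q.1)).card t with h2 | h2
    · exact Or.inl (Or.inl (Or.inr ⟨hp, h2⟩))
    rcases Nat.lt_or_ge (X.filter (fun q => q.1 = p.1 ∧ q.2 < p.2)).card t with h3 | h3
    · exact Or.inl (Or.inr ⟨hp, h3⟩)
    exact Or.inr ⟨hp, hcon p hp h1 h2 h3⟩
  have hinj1 : ∀ p q : ℕ × ℕ, p.2 = q.2 → p.1 = q.1 → p = q := by
    intro p q h1 h2; exact Prod.ext h2 h1
  have hinj2 : ∀ p q : ℕ × ℕ, p.1 = q.1 → p.2 = q.2 → p = q := by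
    intro p q h1 h2; exact Prod.ext h1 h2
  have hlt : Transitive (fun a b : ℕ => a < b) := fun _ _ _ => Nat.lt_trans
  have hgt : Transitive (fun a b : ℕ => b < a) := fun _ _ _ h1 h2 => Nat.lt_trans h2 h1
  have hb1 : B1.card ≤ N * t :=
    bad_bound X N t Prod.snd Prod.fst hinj1 (fun p hp => (hX p hp).2) (· < ·) hlt
      (fun a => Nat.lt_irrefl a) (fun a b h => Nat.lt_or_ge a b |>.imp id (fun h2 => Nat.lt_of_le_of_ne h2 (Ne.symm h)))
  have hb2 : B2.card ≤ N * t :=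
    bad_bound X N t Prod.snd Prod.fst hinj1 (fun p hp => (hX p hp).2) (fun a b => b < a) hgt
      (fun a => Nat.lt_irrefl a) (fun a b h => (Nat.lt_or_ge b a).imp id (fun h2 => Nat.lt_of_le_of_ne h2 h))
  have hb3 : B3.card ≤ N * t :=
    bad_bound X N t Prod.fst Prod.snd hinj2 (fun p hp => (hX p hp).1) (· < ·) hlt
      (fun a => Nat.lt_irrefl a) (fun a b h => Nat.lt_or_ge a b |>.imp id (fun h2 => Nat.lt_of_le_of_ne h2 (Ne.symm h)))
  have hb4 : B4.card ≤ N * t :=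
    bad_bound X N t Prod.fst Prod.snd hinj2 (fun p hp => (hX p hp).1) (fun a b => b < a) hgt
      (fun a => Nat.lt_irrefl a) (fun a b h => (Nat.lt_or_ge b a).imp id (fun h2 => Nat.lt_of_le_of_ne h2 h))
  have : X.card ≤ 4 * N * t := by
    calc X.card ≤ (B1 ∪ B2 ∪ B3 ∪ B4).card := Finset.card_le_card hXsub
      _ ≤ B1.card + B2.card + B3.card + B4.card := by
          refine le_trans (Finset.card_union_le _ _) ?_
          refine Nat.add_le_add_right ?_ _
          refine le_trans (Finset.card_union_le _ _) ?_
          exact Nat.add_le_add_right (Finset.card_union_le _ _) _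
      _ ≤ N * t + N * t + N * t + N * t := by omega
      _ = 4 * N * t := by ring
  omega
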